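/- arXiv:1601.05761 — 3 statements merged into one kernel-verified Lean document; each statement's English description precedes it below -/
import Mathlib

section
/- Let μ ∈ M(𝕋^d) and let Λ ⊂ ℤ^d be a finite subset. Suppose φ ∈ U satisfies ⟨φ,μ⟩ = ε(μ,Λ) and |φ(x)| = 1 for all x ∈ 𝕋^d. Then Γ(μ,Λ) ≠ ∅. -/
/- Setting: `M(𝕋^d)`, the space of complex bounded Radon measures on the `d`-dimensional
torus, is identified with the continuous dual of `C(𝕋^d, ℂ)` via the Riesz representation
theorem; the total variation norm corresponds to the operator norm. -/

open MeasureTheory Complex Real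

noncomputable section

attribute [local instance] ZeroLEOneClass.factZeroLtOne

/-- The `d`-dimensional torus `𝕋^d = (ℝ/ℤ)^d`. -/
abbrev Torus (d : ℕ) : Type := Fin d → AddCircle (1 : ℝ)

/-- The character `x ↦ e^{2πi m·x}` on the torus, for `m ∈ ℤ^d`. -/
def torusChar {d : ℕ} (m : Fin d → ℤ) : C(Torus d, ℂ) :=
  ⟨fun x => ∏ i, fourier (m i) (x i), by
    refine continuous_finset_prod _ fun i _ => ?_
    exact (map_continuous (fourier (m i))).comp (continuous_apply i)⟩

/-- The space `M(𝕋^d)` of complex bounded Radon measures on the torus, identified (via the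
Riesz representation theorem) with the continuous dual of `C(𝕋^d, ℂ)`; the total variation
norm is the operator norm. -/
abbrev TorusMeasure (d : ℕ) : Type := C(Torus d, ℂ) →L[ℂ] ℂ

/-- The Fourier coefficient `μ̂(m) = ∫_{𝕋^d} e^{-2πi m·x} dμ(x)`. -/
def mFourierCoeff {d : ℕ} (μ : TorusMeasure d) (m : Fin d → ℤ) : ℂ :=
  μ (torusChar (-m))

/-- `ν` is an extrapolation of `μ` from `Λ` if `ν̂ = μ̂` on `Λ`. -/
def IsExtrapolation {d : ℕ} (μ : TorusMeasure d) (Λ : Finset (Fin d → ℤ))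
    (ν : TorusMeasure d) : Prop :=
  ∀ m ∈ Λ, mFourierCoeff ν m = mFourierCoeff μ m

/-- `ε(μ,Λ) = inf {‖σ‖ : σ ∈ M(𝕋^d), σ̂ = μ̂ on Λ}`. -/
def minExtNorm {d : ℕ} (μ : TorusMeasure d) (Λ : Finset (Fin d → ℤ)) : ℝ :=
  sInf ((fun ν => ‖ν‖) '' {ν | IsExtrapolation μ Λ ν})

/-- `ν` is a minimal extrapolation of `μ` from `Λ`, i.e. `ν ∈ 𝓔(μ,Λ)`:
an extrapolation whose total variation norm equals `ε(μ,Λ)`. -/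
def IsMinimalExtrapolation {d : ℕ} (μ : TorusMeasure d) (Λ : Finset (Fin d → ℤ))
    (ν : TorusMeasure d) : Prop :=
  IsExtrapolation μ Λ ν ∧ ‖ν‖ = minExtNorm μ Λ

/-- `Γ(μ,Λ) = {m ∈ Λ : |μ̂(m)| = ε(μ,Λ)}`. -/
def gammaSet {d : ℕ} (μ : TorusMeasure d) (Λ : Finset (Fin d → ℤ)) : Set (Fin d → ℤ) :=
  {m | m ∈ Λ ∧ ‖mFourierCoeff μ m‖ = minExtNorm μ Λ}

/-- The measure `ν` is supported in the set `S`: it annihilates every continuous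
function vanishing on `S` (for closed `S` this says `supp(ν) ⊆ S`). -/
def SupportedIn {d : ℕ} (ν : TorusMeasure d) (S : Set (Torus d)) : Prop :=
  ∀ f : C(Torus d, ℂ), (∀ x ∈ S, f x = 0) → ν f = 0

/-- The pairing `⟨f,μ⟩ = ∫_{𝕋^d} f(x) conj(dμ(x)) = conj (μ (conj f))`. -/
def mPairing {d : ℕ} (f : C(Torus d, ℂ)) (μ : TorusMeasure d) : ℂ :=
  starRingEnd ℂ (μ (star f))

/-- `C(𝕋^d;Λ)`: the subspace of trigonometric polynomials
`f(x) = ∑_{m ∈ Λ} a_m e^{2πi m·x}` with frequencies in `Λ`. -/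
def trigPoly {d : ℕ} (Λ : Finset (Fin d → ℤ)) : Submodule ℂ C(Torus d, ℂ) :=
  Submodule.span ℂ (torusChar '' (Λ : Set (Fin d → ℤ)))

/-- For a continuous `g` with `‖g‖_∞ ≤ 1`, the assertion that `sign(ν) = g`
`ν`-almost everywhere, expressed through the standard equivalent condition
`⟨g,ν⟩ = ‖ν‖` (obtained by integrating the Radon–Nikodym identity
`∫ f d|ν| = ∫ f conj(sign ν) dν` against `f = conj g` and using `|ν|(𝕋^d) = ‖ν‖`). -/
def SignEqAE {d : ℕ} (ν : TorusMeasure d) (g : C(Torus d, ℂ)) : Prop :=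
  mPairing g ν = (‖ν‖ : ℂ)

/-- `ν` is a positive measure: it takes nonnegative real values on nonnegative real-valued
continuous functions. -/
def IsPositiveMeasure {d : ℕ} (ν : TorusMeasure d) : Prop :=
  ∀ f : C(Torus d, ℂ), (∀ x, (f x).im = 0 ∧ 0 ≤ (f x).re) → (ν f).im = 0 ∧ 0 ≤ (ν f).re

/-- The Dirac measure `δ_x`: evaluation at `x`. -/
def diracM {d : ℕ} (x : Torus d) : TorusMeasure d :=
  ContinuousMap.evalCLM ℂ x

/-- The modulation `M_n ν`, defined by `d(M_n ν)(x) = e^{2πi n·x} dν(x)`. -/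
def modulateM {d : ℕ} (n : Fin d → ℤ) (ν : TorusMeasure d) : TorusMeasure d :=
  ν.comp (ContinuousLinearMap.mul ℂ C(Torus d, ℂ) (torusChar n))

namespace GammaAux

section circle
variable {T : ℝ} [hT : Fact (0 < T)]

omit hT in
lemma fourier_add_apply (n : ℤ) (a b : AddCircle T) :
    fourier n (a + b) = fourier n a * fourier n b := by
  simp only [fourier_apply, smul_add, AddCircle.toCircle_add, Circle.coe_mul]

omit hT in
lemma norm_fourier (n : ℤ) (a : AddCircle T) : ‖fourier n a‖ = 1 := by
  rw [fourier_apply, Circle.norm_coe]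

end circle

lemma fourier_index_injective {a b : ℤ}
    (h : ∀ t : AddCircle (1 : ℝ), fourier a t = fourier b t) : a = b := by
  by_contra hne
  have hk : (a - b : ℤ) ≠ 0 := sub_ne_zero.2 hne
  have h1 : ∀ t : AddCircle (1 : ℝ), fourier (a - b) t = 1 := by
    intro t
    have hb : fourier b t ≠ 0 := by
      intro h0; have := norm_fourier (T := 1) b t; rw [h0] at this; simp at this
    have h2 : fourier (a - b) t * fourier b t = 1 * fourier b t := by
      rw [one_mul, ← fourier_add, sub_add_cancel]
      exact h t
    exact mul_right_cancel₀ hb h2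
  have := h1 (((2 * (a - b) : ℤ) : ℝ)⁻¹ : ℝ)
  rw [fourier_coe_apply] at this
  have hk' : ((a - b : ℤ) : ℂ) ≠ 0 := Int.cast_ne_zero.2 hk
  have h2k : ((2 : ℂ) * ((a : ℂ) - b)) ≠ 0 :=
    mul_ne_zero two_ne_zero (by push_cast at hk' ⊢; exact hk')
  have hexp : (2 * ↑π * I * ↑(a - b) * ↑(((2 * (a - b) : ℤ) : ℝ)⁻¹) / ((1 : ℝ) : ℂ))
      = ↑π * I := by
    push_cast
    rw [div_one]
    calc 2 * ↑π * I * ((a : ℂ) - b) * (2 * ((a : ℂ) - b))⁻¹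
        = ↑π * I * ((2 * ((a : ℂ) - b)) * (2 * ((a : ℂ) - b))⁻¹) := by ring
      _ = ↑π * I := by rw [mul_inv_cancel₀ h2k, mul_one]
  rw [hexp, Complex.exp_pi_mul_I] at this
  norm_num at this

variable {d : ℕ}

/-- The character as a plain function. -/
def mChar (m : Fin d → ℤ) : Torus d → ℂ := fun x => ∏ i, fourier (m i) (x i)

lemma norm_mChar (m : Fin d → ℤ) (x : Torus d) : ‖mChar m x‖ = 1 := by
  rw [mChar, norm_prod]
  simp [norm_fourier, Circle.norm_coe]

lemma coe_torusChar (m : Fin d → ℤ) : ⇑(torusChar m) = mChar m := rfl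

lemma mChar_neg (m : Fin d → ℤ) (x : Torus d) :
    mChar (-m) x = starRingEnd ℂ (mChar m x) := by
  rw [mChar, mChar, map_prod]
  exact Finset.prod_congr rfl fun i _ => by rw [Pi.neg_apply, fourier_neg]

/-- The character as a monoid hom on the (multiplicative) torus. -/
def charHom (m : Fin d → ℤ) : Multiplicative (Torus d) →* ℂ where
  toFun y := ∏ i, fourier (m i) (y.toAdd i)
  map_one' := by
    simp only [toAdd_one, Pi.zero_apply, fourier_eval_zero, Finset.prod_const_one]
  map_mul' y z := by
    simp only [toAdd_mul, Pi.add_apply]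
    rw [← Finset.prod_mul_distrib]
    exact Finset.prod_congr rfl fun i _ => fourier_add_apply _ _ _

lemma prod_fourier_single (m : Fin d → ℤ) (i : Fin d) (t : AddCircle (1 : ℝ)) :
    ∏ j, fourier (m j) ((Pi.single i t : Torus d) j) = fourier (m i) t := by
  rw [Finset.prod_eq_single i
    (fun j _ hj => by rw [Pi.single_eq_of_ne hj, fourier_eval_zero])
    (fun hi => absurd (Finset.mem_univ i) hi), Pi.single_eq_same]

lemma charHom_injective : Function.Injective (charHom (d := d)) := by
  intro m m' h
  funext i
  apply fourier_index_injective
  intro t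
  have h1 := DFunLike.congr_fun h (Multiplicative.ofAdd (Pi.single i t))
  simp only [charHom, MonoidHom.coe_mk, OneHom.coe_mk, toAdd_ofAdd] at h1
  rwa [prod_fourier_single, prod_fourier_single] at h1

/-- The evaluation monoid hom `ℤ^d →* (Torus d → ℂ)`. -/
def psiHom (d : ℕ) : Multiplicative (Fin d → ℤ) →* (Torus d → ℂ) where
  toFun m := mChar m.toAdd
  map_one' := funext fun x => by
    simp only [mChar, toAdd_one, Pi.zero_apply, fourier_zero, Finset.prod_const_one,
      Pi.one_apply]
  map_mul' m n := funext fun x => by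
    simp only [mChar, toAdd_mul, Pi.add_apply, Pi.mul_apply]
    rw [← Finset.prod_mul_distrib]
    exact Finset.prod_congr rfl fun i _ => fourier_add

/-- Evaluation of the group algebra `ℂ[ℤ^d]` as functions on the torus. -/
def evalHom (d : ℕ) : AddMonoidAlgebra ℂ (Fin d → ℤ) →ₐ[ℂ] (Torus d → ℂ) :=
  AddMonoidAlgebra.lift ℂ (Torus d → ℂ) (Fin d → ℤ) (psiHom d)

lemma linearIndependent_mChar : LinearIndependent ℂ (mChar (d := d)) := by
  have li2 := (linearIndependent_monoidHom (Multiplicative (Torus d)) ℂ).comp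
    charHom charHom_injective
  let e : (Multiplicative (Torus d) → ℂ) ≃ₗ[ℂ] (Torus d → ℂ) :=
    LinearEquiv.funCongrLeft ℂ ℂ (Multiplicative.ofAdd : Torus d ≃ Multiplicative (Torus d))
  have li3 := li2.map' e.toLinearMap e.ker
  have heq : (⇑e.toLinearMap ∘ ((fun f : Multiplicative (Torus d) →* ℂ => ⇑f) ∘ charHom (d := d))) = mChar (d := d) := by
    funext m x
    rfl
  rwa [heq] at li3

lemma evalHom_eq_linearCombination (p : AddMonoidAlgebra ℂ (Fin d → ℤ)) :
    evalHom d p = Finsupp.linearCombination ℂ (mChar (d := d)) p.coeff := by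
  rw [evalHom, AddMonoidAlgebra.lift_apply, Finsupp.linearCombination_apply]
  rfl

lemma evalHom_injective : Function.Injective (evalHom d) := by
  intro p p' h
  apply AddMonoidAlgebra.coeff_injective
  apply linearIndependent_mChar
  rw [← evalHom_eq_linearCombination, ← evalHom_eq_linearCombination]
  exact h

lemma extreme_pair_eq_zero
    {R G B : Type*} [CommRing R] [NoZeroDivisors R] [AddCommGroup G]
    [AddCommGroup B] [LinearOrder B] [IsOrderedAddMonoid B] (D : G →+ B) (hD : Function.Injective D)
    {p q : AddMonoidAlgebra R G} (h : p * q = 1) {a b : G}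
    (ha : a ∈ p.coeff.support) (hb : b ∈ q.coeff.support)
    (hamax : ∀ a' ∈ p.coeff.support, D a' ≤ D a) (hbmax : ∀ b' ∈ q.coeff.support, D b' ≤ D b) :
    a + b = 0 := by
  classical
  have hcoeff : (p * q).coeff (a + b) = p.coeff a * q.coeff b := by
    rw [AddMonoidAlgebra.coeff_mul]
    rw [Finsupp.sum]
    rw [Finset.sum_eq_single a]
    · rw [Finsupp.sum, Finset.sum_eq_single b]
      · rw [if_pos rfl]
      · intro b' hb' hne
        rw [if_neg]
        intro hsum
        exact hne (add_left_cancel hsum)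
      · intro hbn; exact absurd hb hbn
    · intro a' ha' hne
      rw [Finsupp.sum]
      apply Finset.sum_eq_zero
      intro b' hb'
      rw [if_neg]
      intro hsum
      have h1 : D a' < D a := lt_of_le_of_ne (hamax a' ha') (fun he => hne (hD he))
      have h2 : D b' ≤ D b := hbmax b' hb'
      have h3 : D a' + D b' < D a + D b := add_lt_add_of_lt_of_le h1 h2
      rw [← map_add, ← map_add, hsum] at h3
      exact lt_irrefl _ h3
    · intro han; exact absurd ha han
  have hne : (p * q).coeff (a + b) ≠ 0 := by
    rw [hcoeff]
    exact mul_ne_zero (Finsupp.mem_support_iff.1 ha) (Finsupp.mem_support_iff.1 hb)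
  rw [h] at hne
  by_contra hab
  apply hne
  rw [AddMonoidAlgebra.one_def, AddMonoidAlgebra.coeff_single, Finsupp.single_apply, if_neg (fun he => hab he.symm)]

lemma support_singleton_of_mul_eq_one
    {R G B : Type*} [CommRing R] [NoZeroDivisors R] [Nontrivial R] [AddCommGroup G]
    [AddCommGroup B] [LinearOrder B] [IsOrderedAddMonoid B] (D : G →+ B) (hD : Function.Injective D)
    {p q : AddMonoidAlgebra R G} (h : p * q = 1) : ∃ a, p.coeff.support = {a} := by
  classical
  have hp : p ≠ 0 := by rintro rfl; rw [zero_mul] at h; exact zero_ne_one h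
  have hq : q ≠ 0 := by rintro rfl; rw [mul_zero] at h; exact zero_ne_one h
  have hps : p.coeff.support.Nonempty := Finsupp.support_nonempty_iff.2 (by rwa [Ne, AddMonoidAlgebra.coeff_eq_zero])
  have hqs : q.coeff.support.Nonempty := Finsupp.support_nonempty_iff.2 (by rwa [Ne, AddMonoidAlgebra.coeff_eq_zero])
  obtain ⟨amax, hamax, hamax'⟩ := p.coeff.support.exists_max_image (fun a => D a) hps
  obtain ⟨amin, hamin, hamin'⟩ := p.coeff.support.exists_min_image (fun a => D a) hps
  obtain ⟨bmax, hbmax, hbmax'⟩ := q.coeff.support.exists_max_image (fun b => D b) hqs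
  obtain ⟨bmin, hbmin, hbmin'⟩ := q.coeff.support.exists_min_image (fun b => D b) hqs
  have e1 : amax + bmax = 0 := extreme_pair_eq_zero D hD h hamax hbmax hamax' hbmax'
  have e2 : amin + bmin = 0 := by
    have hDneg : Function.Injective (-D : G →+ B) := by
      intro x y hxy
      exact hD (neg_injective hxy)
    exact extreme_pair_eq_zero (-D) hDneg h hamin hbmin
      (fun a' ha' => neg_le_neg (hamin' a' ha'))
      (fun b' hb' => neg_le_neg (hbmin' b' hb'))
  have heq : D amax = D amin := by
    have h1 : D amin ≤ D amax := hamax' amin hamin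
    have h2 : D bmin ≤ D bmax := hbmax' bmin hbmin
    have h3 : D amax + D bmax = 0 := by rw [← map_add, e1, map_zero]
    have h4 : D amin + D bmin = 0 := by rw [← map_add, e2, map_zero]
    rcases lt_or_eq_of_le h1 with hlt | he
    · have h5 : D amin + D bmin < D amax + D bmax := add_lt_add_of_lt_of_le hlt h2
      rw [h3, h4] at h5
      exact absurd h5 (lt_irrefl 0)
    · exact he.symm
  refine ⟨amax, Finset.eq_singleton_iff_unique_mem.2 ⟨hamax, fun x hx => ?_⟩⟩
  apply hD
  apply le_antisymm (hamax' x hx)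
  rw [heq]
  exact hamin' x hx

noncomputable instance lexLOACG (d : ℕ) : IsOrderedAddMonoid (Lex (Fin d → ℤ)) :=
  inferInstance

/-- `toLex` as an additive hom to the lexicographic order on `ℤ^d`. -/
def toLexHom (d : ℕ) : (Fin d → ℤ) →+ Lex (Fin d → ℤ) where
  toFun := toLex
  map_zero' := rfl
  map_add' _ _ := rfl

lemma exists_monomial (Λ : Finset (Fin d → ℤ)) (φ : C(Torus d, ℂ))
    (hφΛ : φ ∈ trigPoly Λ) (hmod : ∀ x, ‖φ x‖ = 1) :
    ∃ m ∈ Λ, ∃ a : ℂ, ‖a‖ = 1 ∧ φ = a • torusChar m := by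
  classical
  obtain ⟨c, hcsupp, hc⟩ := (Finsupp.mem_span_image_iff_linearCombination ℂ).1 hφΛ
  have hcΛ : ↑c.support ⊆ (Λ : Set (Fin d → ℤ)) := (Finsupp.mem_supported ℂ c).1 hcsupp
  have hEc : evalHom d (.ofCoeff c) = ⇑φ := by
    rw [evalHom_eq_linearCombination, ← hc]
    rw [Finsupp.linearCombination_apply, Finsupp.linearCombination_apply]
    rw [show ⇑(c.sum fun m a => a • torusChar m)
         = (ContinuousMap.coeFnLinearMap ℂ) (c.sum fun m a => a • torusChar m) from rfl]
    rw [map_finsuppSum]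
    exact (Finsupp.sum_congr fun m _ => by rw [_root_.map_smul]; rfl).symm
  have hφx : ∀ x, φ x = ∑ m ∈ c.support, c m * mChar m x := by
    intro x
    rw [show φ x = evalHom d (.ofCoeff c) x from by rw [hEc]]
    rw [evalHom_eq_linearCombination, Finsupp.linearCombination_apply, Finsupp.sum,
      Finset.sum_apply]
    rfl
  set q : AddMonoidAlgebra ℂ (Fin d → ℤ) :=
    ∑ m ∈ c.support, AddMonoidAlgebra.single (-m) (starRingEnd ℂ (c m)) with hqdef
  have term : ∀ m : Fin d → ℤ, evalHom d (AddMonoidAlgebra.single (-m) (starRingEnd ℂ (c m)))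
      = starRingEnd ℂ (c m) • mChar (-m) := by
    intro m
    rw [evalHom, AddMonoidAlgebra.lift_single]
    rfl
  have hEq : evalHom d q = fun x => starRingEnd ℂ (φ x) := by
    funext x
    have h1 : evalHom d q x = ∑ m ∈ c.support, starRingEnd ℂ (c m) * mChar (-m) x := by
      rw [hqdef, map_sum, Finset.sum_apply]
      refine Finset.sum_congr rfl fun m _ => ?_
      rw [term m]
      rfl
    rw [h1, hφx x, map_sum]
    refine Finset.sum_congr rfl fun m _ => ?_
    rw [map_mul, mChar_neg]
  let p : AddMonoidAlgebra ℂ (Fin d → ℤ) := .ofCoeff c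
  have hmul : p * q = 1 := by
    apply evalHom_injective
    rw [map_mul, hEc, hEq, map_one]
    funext x
    rw [Pi.mul_apply, Pi.one_apply, Complex.mul_conj, Complex.normSq_eq_norm_sq,
      hmod x]
    norm_num
  obtain ⟨m, hm⟩ := support_singleton_of_mul_eq_one (toLexHom d)
    (fun x y h => toLex.injective h) hmul
  have hmem : m ∈ c.support := by rw [show c.support = {m} from hm]; exact Finset.mem_singleton_self m
  have hmΛ : m ∈ Λ := hcΛ hmem
  have hsingle : c = Finsupp.single m (c m) := (Finsupp.support_eq_singleton.1 hm).2
  have hφeq : φ = c m • torusChar m := by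
    rw [← hc, hsingle, Finsupp.linearCombination_single]
    rw [show (Finsupp.single m (c m)) m = c m from by rw [← hsingle]]
  have hnorm : ‖c m‖ = 1 := by
    have h0 := hmod (fun _ => 0)
    rw [hφeq] at h0
    rw [ContinuousMap.smul_apply, smul_eq_mul, norm_mul] at h0
    rw [show ‖(torusChar m) (fun _ => (0 : AddCircle (1:ℝ)))‖ = 1 from
      norm_mChar m _, mul_one] at h0
    exact h0
  exact ⟨m, hmΛ, c m, hnorm, hφeq⟩

end GammaAux

/-- **Proposition 2.2(a).** If `φ ∈ U` satisfies `⟨φ,μ⟩ = ε(μ,Λ)` and `|φ| ≡ 1`,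
then `Γ(μ,Λ) ≠ ∅`. -/
theorem gammaSet_nonempty_of_unimodular_extremal {d : ℕ} (μ : TorusMeasure d)
    (Λ : Finset (Fin d → ℤ)) (φ : C(Torus d, ℂ)) (hφΛ : φ ∈ trigPoly Λ)
    (hφ1 : ‖φ‖ ≤ 1) (hφμ : mPairing φ μ = (minExtNorm μ Λ : ℂ))
    (hmod : ∀ x, ‖φ x‖ = 1) :
    (gammaSet μ Λ).Nonempty := by
  obtain ⟨m, hmΛ, a, ha, hφeq⟩ := GammaAux.exists_monomial Λ φ hφΛ hmod
  refine ⟨m, hmΛ, ?_⟩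
  have hstar : star φ = (starRingEnd ℂ a) • torusChar (-m) := by
    ext x
    rw [ContinuousMap.star_apply, hφeq, ContinuousMap.smul_apply, ContinuousMap.smul_apply,
      smul_eq_mul, smul_eq_mul, star_mul']
    congr 1
    rw [show (torusChar (-m)) x = GammaAux.mChar (-m) x from rfl, GammaAux.mChar_neg]
    rfl
  have hpair : mPairing φ μ = a * starRingEnd ℂ (mFourierCoeff μ m) := by
    rw [mPairing, hstar, _root_.map_smul, smul_eq_mul, map_mul, Complex.conj_conj]
    rfl
  have hε : (minExtNorm μ Λ : ℂ) = a * starRingEnd ℂ (mFourierCoeff μ m) := by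
    rw [← hφμ, hpair]
  have hnn : 0 ≤ minExtNorm μ Λ := by
    apply Real.sInf_nonneg
    rintro x ⟨ν, -, rfl⟩
    exact norm_nonneg ν
  have hnorm := congrArg norm hε
  rw [Complex.norm_real, Real.norm_of_nonneg hnn, norm_mul] at hnorm
  rw [ha, one_mul, Complex.norm_conj] at hnorm
  exact hnorm.symm


end
end

section
/- Let μ ∈ M(𝕋^d) and let Λ ⊂ ℤ^d be a finite subset. For m ∈ ℤ^d define α_m ∈ ℝ/ℤ by e^{-2πi α_m} μ̂(m) = |μ̂(m)|. If m ∈ Γ(μ,Λ), then for every minimal extrapolation ν ∈ 𝓔(μ,Λ), sign(ν)(x) = e^{2πi α_m} e^{2πi m·x} for ν-almost every x. -/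
/- Setting: `M(𝕋^d)`, the space of complex bounded Radon measures on the `d`-dimensional
torus, is identified with the continuous dual of `C(𝕋^d, ℂ)` via the Riesz representation
theorem; the total variation norm corresponds to the operator norm. -/

open MeasureTheory Complex Real

noncomputable section

attribute [local instance] ZeroLEOneClass.factZeroLtOne

/-- **Proposition 2.2(b).** For `m ∈ ℤ^d` define `α_m ∈ ℝ/ℤ` by
`e^{-2πi α_m} μ̂(m) = |μ̂(m)|`. If `m ∈ Γ(μ,Λ)`, then for every minimal extrapolation `ν`,
`sign(ν)(x) = e^{2πi α_m} e^{2πi m·x}` for `ν`-almost every `x`. -/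
theorem sign_eq_modulated_character_of_mem_gamma {d : ℕ} (μ : TorusMeasure d)
    (Λ : Finset (Fin d → ℤ)) (m : Fin d → ℤ) (hm : m ∈ gammaSet μ Λ) (α : ℝ)
    (hα : Complex.exp (-(2 * (π : ℂ) * Complex.I * (α : ℂ))) * mFourierCoeff μ m =
      (‖mFourierCoeff μ m‖ : ℂ)) :
    ∀ ν : TorusMeasure d, IsMinimalExtrapolation μ Λ ν →
      SignEqAE ν (Complex.exp (2 * (π : ℂ) * Complex.I * (α : ℂ)) • torusChar m) := by
  intro ν hν
  obtain ⟨hext, hnorm⟩ := hν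
  obtain ⟨hmΛ, hmε⟩ := hm
  unfold SignEqAE mPairing
  have h1 : (starRingEnd ℂ) (Complex.exp (2 * (π : ℂ) * Complex.I * (α : ℂ)))
      = Complex.exp (-(2 * (π : ℂ) * Complex.I * (α : ℂ))) := by
    rw [← Complex.exp_conj]
    congr 1
    simp only [map_mul, Complex.conj_I, Complex.conj_ofReal, map_ofNat]
    ring
  have hstar : star (Complex.exp (2 * (π : ℂ) * Complex.I * (α : ℂ)) • torusChar m)
      = Complex.exp (-(2 * (π : ℂ) * Complex.I * (α : ℂ))) • torusChar (-m) := by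
    ext x
    simp only [ContinuousMap.star_apply, ContinuousMap.smul_apply, star_smul, smul_eq_mul]
    rw [show (star (Complex.exp (2 * (π : ℂ) * Complex.I * (α : ℂ)))) =
      Complex.exp (-(2 * (π : ℂ) * Complex.I * (α : ℂ))) from h1]
    congr 1
    show (starRingEnd ℂ) (torusChar m x) = torusChar (-m) x
    simp only [torusChar, ContinuousMap.coe_mk, map_prod]
    refine Finset.prod_congr rfl fun i _ => ?_
    rw [Pi.neg_apply, fourier_neg]
  rw [hstar, ContinuousLinearMap.map_smul, smul_eq_mul]
  have hcoeff : ν (torusChar (-m)) = mFourierCoeff μ m := hext m hmΛ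
  rw [hcoeff, hα, Complex.conj_ofReal, hmε, hnorm]

end
end

section
/- Let μ = δ_0 − δ_{1/2} ∈ M(𝕋) and Λ = {−1, 0, 1} ⊂ ℤ. Then ε(μ,Λ) = 2, and μ is the unique minimal extrapolation of μ from Λ, i.e. 𝓔(μ,Λ) = {δ_0 − δ_{1/2}}; hence super-resolution reconstruction of μ from its Fourier coefficients on Λ is possible. -/
/- Setting: `M(𝕋^d)`, the space of complex bounded Radon measures on the `d`-dimensional
torus, is identified with the continuous dual of `C(𝕋^d, ℂ)` via the Riesz representation
theorem; the total variation norm corresponds to the operator norm. -/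

open MeasureTheory Complex Real

noncomputable section

attribute [local instance] ZeroLEOneClass.factZeroLtOne

namespace Example32

abbrev P0 : Torus 1 := fun _ => (0 : AddCircle (1:ℝ))
abbrev P1 : Torus 1 := fun _ => ((1 / 2 : ℝ) : AddCircle (1:ℝ))

abbrev muEx : TorusMeasure 1 := diracM P0 - diracM P1

abbrev LamEx : Finset (Fin 1 → ℤ) := {fun _ => -1, fun _ => 0, fun _ => 1}

lemma muEx_apply (f : C(Torus 1, ℂ)) : muEx f = f P0 - f P1 := rfl

lemma torusChar_apply (m : Fin 1 → ℤ) (x : Torus 1) : torusChar m x = fourier (m 0) (x 0) := by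
  show ∏ i : Fin 1, fourier (m i) (x i) = _
  exact Fin.prod_univ_one _

lemma norm_fourier (n : ℤ) (y : AddCircle (1:ℝ)) : ‖fourier n y‖ = 1 := by
  rw [fourier_apply, Circle.norm_coe]

lemma fourier_at_zeroR (n : ℤ) : fourier n ((0:ℝ) : AddCircle (1:ℝ)) = 1 := by
  rw [fourier_coe_apply]; norm_num

lemma zero_eq_coe : (0 : AddCircle (1:ℝ)) = ((0:ℝ) : AddCircle (1:ℝ)) :=
  (QuotientAddGroup.mk_zero _).symm

lemma fourier_at_zero (n : ℤ) : fourier n (0 : AddCircle (1:ℝ)) = 1 := by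
  rw [zero_eq_coe]; exact fourier_at_zeroR n

lemma fourier_one_half : fourier 1 (((1/2:ℝ)) : AddCircle (1:ℝ)) = -1 := by
  rw [fourier_coe_apply]
  have : (2 * ↑π * Complex.I * ((1:ℤ):ℂ) * ((1/2:ℝ):ℂ) / ((1:ℝ):ℂ)) = ↑π * Complex.I := by
    push_cast; ring
  rw [this, Complex.exp_pi_mul_I]

lemma fourier_negone_half : fourier (-1) (((1/2:ℝ)) : AddCircle (1:ℝ)) = -1 := by
  rw [fourier_coe_apply]
  have : (2 * ↑π * Complex.I * ((-1:ℤ):ℂ) * ((1/2:ℝ):ℂ) / ((1:ℝ):ℂ)) = -(↑π * Complex.I) := by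
    push_cast; ring
  rw [this, Complex.exp_neg, Complex.exp_pi_mul_I]
  norm_num

/-- The function `h(x) = cos (2 π x)`. -/
def hEx : C(Torus 1, ℂ) := (2⁻¹ : ℂ) • (torusChar (fun _ => (-1:ℤ)) + torusChar (fun _ => (1:ℤ)))

lemma hEx_coe (t : ℝ) (x : Torus 1) (hx : x 0 = (t : AddCircle (1:ℝ))) :
    hEx x = ((Real.cos (2*π*t) : ℝ) : ℂ) := by
  have h1 : hEx x = 2⁻¹ * (fourier (-1) (x 0) + fourier 1 (x 0)) := by
    simp [hEx, torusChar_apply]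
  rw [h1, hx, fourier_coe_apply, fourier_coe_apply]
  have e1 : (2 * ↑π * Complex.I * ((-1:ℤ):ℂ) * (t:ℂ) / ((1:ℝ):ℂ))
      = -((2*π*t : ℝ):ℂ) * Complex.I := by push_cast; ring
  have e2 : (2 * ↑π * Complex.I * ((1:ℤ):ℂ) * (t:ℂ) / ((1:ℝ):ℂ))
      = ((2*π*t : ℝ):ℂ) * Complex.I := by push_cast; ring
  rw [e1, e2, Complex.exp_mul_I, Complex.exp_mul_I, Complex.cos_neg, Complex.sin_neg,
    Complex.ofReal_cos]
  ring

lemma exists_lift (x : Torus 1) : ∃ t : ℝ, x 0 = (t : AddCircle (1:ℝ)) := by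
  obtain ⟨t, ht⟩ := QuotientAddGroup.mk_surjective (x 0)
  exact ⟨t, ht.symm⟩

lemma norm_hEx_le (x : Torus 1) : ‖hEx x‖ ≤ 1 := by
  obtain ⟨t, ht⟩ := exists_lift x
  rw [hEx_coe t x ht, Complex.norm_real, Real.norm_eq_abs]
  exact Real.abs_cos_le_one _

lemma eq_P0_or_P1 (x : Torus 1) (hx : ‖hEx x‖ = 1) : x = P0 ∨ x = P1 := by
  obtain ⟨t, ht⟩ := exists_lift x
  rw [hEx_coe t x ht, Complex.norm_real, Real.norm_eq_abs] at hx
  have hsin : Real.sin (2*π*t) = 0 := by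
    have h2 : Real.cos (2*π*t) ^ 2 = 1 := by rw [← _root_.sq_abs, hx]; norm_num
    nlinarith [Real.sin_sq_add_cos_sq (2*π*t)]
  obtain ⟨n, hn⟩ := Real.sin_eq_zero_iff.mp hsin
  have hπ : (π : ℝ) ≠ 0 := Real.pi_ne_zero
  have hteq : t = n / 2 := by
    have h2 : (2 * t) * π = (n:ℝ) * π := by linarith
    have := mul_right_cancel₀ hπ h2
    linarith
  rcases Int.even_or_odd n with ⟨k, hk⟩ | ⟨k, hk⟩
  · left
    have : (t : AddCircle (1:ℝ)) = 0 := by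
      rw [AddCircle.coe_eq_zero_iff]
      refine ⟨k, ?_⟩
      rw [hteq, hk, zsmul_eq_mul]; push_cast; ring
    funext i
    rw [Subsingleton.elim i 0, ht, this]
  · right
    have hsub : ((t - 1/2 : ℝ) : AddCircle (1:ℝ)) = 0 := by
      rw [AddCircle.coe_eq_zero_iff]
      refine ⟨k, ?_⟩
      rw [hteq, hk, zsmul_eq_mul]; push_cast; ring
    have h3 : (t : AddCircle (1:ℝ)) - ((1/2:ℝ) : AddCircle (1:ℝ)) = 0 := by
      rw [← AddCircle.coe_sub]; exact hsub
    have : (t : AddCircle (1:ℝ)) = ((1/2 : ℝ) : AddCircle (1:ℝ)) := sub_eq_zero.mp h3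
    funext i
    rw [Subsingleton.elim i 0, ht, this]

lemma hEx_P0 : hEx P0 = 1 := by
  rw [hEx_coe 0 P0 (by exact zero_eq_coe)]
  norm_num

lemma hEx_P1 : hEx P1 = -1 := by
  rw [hEx_coe (1/2) P1 rfl]
  rw [show 2*π*(1/2 : ℝ) = π by ring, Real.cos_pi]
  norm_num

/-- Key lemma: a functional of norm at most 2 pairing to 2 against `h` kills every
continuous function vanishing at both extreme points of `h`. -/
lemma vanish (ν : TorusMeasure 1) (hn : ‖ν‖ ≤ 2) (hνh : ν hEx = 2)
    (f : C(Torus 1, ℂ)) (h0 : f P0 = 0) (h1 : f P1 = 0) : ν f = 0 := by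
  have hball : ∀ ε : ℝ, 0 < ε → ‖ν f‖ ≤ 2 * ε := by
    intro ε hε
    obtain ⟨δ, hδpos, hδ⟩ : ∃ δ : ℝ, 0 < δ ∧ ∀ x, 1 - δ ≤ ‖hEx x‖ → ‖f x‖ < ε := by
      by_cases hS : ∃ x, ε ≤ ‖f x‖
      · set S := {x : Torus 1 | ε ≤ ‖f x‖} with hSdef
        have hScl : IsClosed S := isClosed_le continuous_const (f.continuous.norm)
        have hScp : IsCompact S := hScl.isCompact
        obtain ⟨y, hyS, hmax⟩ := hScp.exists_isMaxOn hS
          ((hEx.continuous.norm).continuousOn)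
        have hne : ‖hEx y‖ ≠ 1 := by
          intro heq
          rcases eq_P0_or_P1 y heq with h | h <;>
            · rw [hSdef] at hyS
              simp only [Set.mem_setOf_eq, h] at hyS
              rw [h0] at * <;> rw [h1] at * <;> simp_all <;> linarith
        have hlt : ‖hEx y‖ < 1 := lt_of_le_of_ne (norm_hEx_le y) hne
        refine ⟨(1 - ‖hEx y‖)/2, by linarith, fun x hx => ?_⟩
        by_contra hc
        push_neg at hc
        have hxS : x ∈ S := hc
        have := hmax hxS
        simp only [Set.mem_setOf_eq] at this
        linarith
      · push_neg at hS
        exact ⟨1, one_pos, fun x _ => hS x⟩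
    by_cases hν0 : ν f = 0
    · rw [hν0]; simp; positivity
    by_cases hf0 : f = 0
    · exact absurd (by simp [hf0]) hν0
    have hfn : 0 < ‖f‖ := norm_pos_iff.mpr hf0
    have hzn : (0:ℝ) < ‖ν f‖ := norm_pos_iff.mpr hν0
    set c : ℂ := (starRingEnd ℂ) (ν f) / (‖ν f‖ : ℂ) with hc
    have hcn : ‖c‖ = 1 := by
      rw [hc, norm_div, RCLike.norm_conj, Complex.norm_real, Real.norm_eq_abs,
        abs_of_pos hzn, div_self hzn.ne']
    have hcν : c * ν f = (‖ν f‖ : ℂ) := by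
      rw [hc, div_mul_eq_mul_div, mul_comm, Complex.mul_conj']
      have hz : ((‖ν f‖:ℝ):ℂ) ≠ 0 := by
        simpa using hzn.ne'
      rw [sq, mul_div_assoc, div_self hz, mul_one]
    set t : ℝ := δ / ‖f‖ with htdef
    have ht : 0 < t := div_pos hδpos hfn
    set a : ℂ := (t : ℂ) * c with ha
    have han : ‖a‖ = t := by rw [ha, norm_mul, hcn, mul_one, Complex.norm_real,
      Real.norm_eq_abs, abs_of_pos ht]
    set g : C(Torus 1, ℂ) := hEx + a • f with hg
    have hgx : ∀ x, g x = hEx x + a * f x := fun x => rfl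
    have hgnorm : ‖g‖ ≤ 1 + t * ε := by
      refine (ContinuousMap.norm_le _ (by positivity)).mpr fun x => ?_
      have hb : ‖g x‖ ≤ ‖hEx x‖ + t * ‖f x‖ := by
        rw [hgx]
        calc ‖hEx x + a * f x‖ ≤ ‖hEx x‖ + ‖a * f x‖ := norm_add_le _ _
        _ = ‖hEx x‖ + t * ‖f x‖ := by rw [norm_mul, han]
      by_cases hx : 1 - δ ≤ ‖hEx x‖
      · have := hδ x hx
        have := norm_hEx_le x
        nlinarith
      · push_neg at hx
        have h2 : ‖f x‖ ≤ ‖f‖ := f.norm_coe_le_norm x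
        have h3 : t * ‖f x‖ ≤ δ := by
          rw [htdef, div_mul_eq_mul_div, div_le_iff₀ hfn]
          nlinarith
        have : 0 ≤ t * ε := by positivity
        linarith
    have hνg : ν g = ((2 + t * ‖ν f‖ : ℝ) : ℂ) := by
      rw [hg, map_add, _root_.map_smul, hνh, smul_eq_mul, ha, mul_assoc, hcν]
      push_cast
      ring
    have hνgn : ‖ν g‖ = 2 + t * ‖ν f‖ := by
      rw [hνg, Complex.norm_real, Real.norm_eq_abs, abs_of_pos (by positivity)]
    have hop : ‖ν g‖ ≤ ‖ν‖ * ‖g‖ := ν.le_opNorm g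
    have : 2 + t * ‖ν f‖ ≤ 2 * (1 + t * ε) := by
      rw [← hνgn]
      calc ‖ν g‖ ≤ ‖ν‖ * ‖g‖ := hop
      _ ≤ 2 * (1 + t * ε) :=
        mul_le_mul hn hgnorm (norm_nonneg _) (by norm_num)
    nlinarith
  by_contra hne
  have hpos : 0 < ‖ν f‖ := norm_pos_iff.mpr hne
  have := hball (‖ν f‖ / 4) (by positivity)
  linarith

lemma neg_const (a : ℤ) : (-(fun _ : Fin 1 => a) : Fin 1 → ℤ) = fun _ => -a := by
  funext i; rfl

lemma coeff_muEx_one : mFourierCoeff muEx (fun _ => (1:ℤ)) = 2 := by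
  rw [mFourierCoeff, neg_const, muEx_apply, torusChar_apply, torusChar_apply]
  show fourier (-1) (P0 0) - fourier (-1) (P1 0) = 2
  rw [show P0 0 = (0 : AddCircle (1:ℝ)) from rfl, fourier_at_zero,
    show P1 0 = (((1/2:ℝ)) : AddCircle (1:ℝ)) from rfl, fourier_negone_half]
  norm_num

lemma coeff_muEx_negone : mFourierCoeff muEx (fun _ => (-1:ℤ)) = 2 := by
  rw [mFourierCoeff, neg_const, muEx_apply, torusChar_apply, torusChar_apply]
  show fourier (-(-1)) (P0 0) - fourier (-(-1)) (P1 0) = 2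
  rw [show (-(-1) : ℤ) = 1 from rfl]
  rw [show P0 0 = (0 : AddCircle (1:ℝ)) from rfl, fourier_at_zero,
    show P1 0 = (((1/2:ℝ)) : AddCircle (1:ℝ)) from rfl, fourier_one_half]
  norm_num

lemma coeff_muEx_zero : mFourierCoeff muEx (fun _ => (0:ℤ)) = 0 := by
  rw [mFourierCoeff, neg_const, muEx_apply, torusChar_apply, torusChar_apply]
  show fourier (-0) (P0 0) - fourier (-0) (P1 0) = 0
  rw [show (-0 : ℤ) = 0 from rfl]
  rw [show P0 0 = (0 : AddCircle (1:ℝ)) from rfl, fourier_at_zero,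
    show P1 0 = (((1/2:ℝ)) : AddCircle (1:ℝ)) from rfl]
  rw [fourier_zero]
  ring

lemma mem_neg1 : (fun _ : Fin 1 => (-1:ℤ)) ∈ LamEx := Finset.mem_insert_self _ _
lemma mem_zero : (fun _ : Fin 1 => (0:ℤ)) ∈ LamEx :=
  Finset.mem_insert_of_mem (Finset.mem_insert_self _ _)
lemma mem_one : (fun _ : Fin 1 => (1:ℤ)) ∈ LamEx :=
  Finset.mem_insert_of_mem (Finset.mem_insert_of_mem (Finset.mem_singleton_self _))

lemma extrap_vals (ν : TorusMeasure 1) (hE : IsExtrapolation muEx LamEx ν) :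
    ν (torusChar (fun _ => (1:ℤ))) = 2 ∧ ν (torusChar (fun _ => (-1:ℤ))) = 2 ∧
      ν (torusChar (fun _ => (0:ℤ))) = 0 := by
  have h1 := hE _ mem_neg1
  have h2 := hE _ mem_one
  have h3 := hE _ mem_zero
  rw [coeff_muEx_negone, mFourierCoeff, neg_const] at h1
  rw [coeff_muEx_one, mFourierCoeff, neg_const] at h2
  rw [coeff_muEx_zero, mFourierCoeff, neg_const] at h3
  norm_num at h1 h2 h3
  exact ⟨h1, h2, h3⟩

lemma nu_hEx (ν : TorusMeasure 1) (hE : IsExtrapolation muEx LamEx ν) : ν hEx = 2 := by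
  obtain ⟨h1, h2, _⟩ := extrap_vals ν hE
  rw [hEx, _root_.map_smul, map_add, h1, h2, smul_eq_mul]
  norm_num

lemma reconstruct (ν : TorusMeasure 1) (hE : IsExtrapolation muEx LamEx ν)
    (hn : ‖ν‖ ≤ 2) : ν = muEx := by
  obtain ⟨h1, h2, h3⟩ := extrap_vals ν hE
  have hνh : ν hEx = 2 := nu_hEx ν hE
  have honev : ∀ x : Torus 1, torusChar (fun _ => (0:ℤ)) x = 1 := by
    intro x; rw [torusChar_apply]; exact fourier_zero
  ext f
  set p : C(Torus 1, ℂ) := (2⁻¹ : ℂ) • (torusChar (fun _ => (0:ℤ)) + hEx) with hp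
  set q : C(Torus 1, ℂ) := (2⁻¹ : ℂ) • (torusChar (fun _ => (0:ℤ)) - hEx) with hq
  have hp0 : p P0 = 1 := by
    show (2⁻¹ : ℂ) * (torusChar (fun _ => (0:ℤ)) P0 + hEx P0) = 1
    rw [honev, hEx_P0]; norm_num
  have hp1 : p P1 = 0 := by
    show (2⁻¹ : ℂ) * (torusChar (fun _ => (0:ℤ)) P1 + hEx P1) = 0
    rw [honev, hEx_P1]; norm_num
  have hq0 : q P0 = 0 := by
    show (2⁻¹ : ℂ) * (torusChar (fun _ => (0:ℤ)) P0 - hEx P0) = 0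
    rw [honev, hEx_P0]; norm_num
  have hq1 : q P1 = 1 := by
    show (2⁻¹ : ℂ) * (torusChar (fun _ => (0:ℤ)) P1 - hEx P1) = 1
    rw [honev, hEx_P1]; norm_num
  set r : C(Torus 1, ℂ) := f - f P0 • p - f P1 • q with hr
  have hr0 : r P0 = 0 := by
    show f P0 - f P0 * p P0 - f P1 * q P0 = 0
    rw [hp0, hq0]; ring
  have hr1 : r P1 = 0 := by
    show f P1 - f P0 * p P1 - f P1 * q P1 = 0
    rw [hp1, hq1]; ring
  have hνr : ν r = 0 := vanish ν hn hνh r hr0 hr1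
  have e : ν r = ν f - f P0 * (2⁻¹ * (ν (torusChar fun _ => (0:ℤ)) + ν hEx))
      - f P1 * (2⁻¹ * (ν (torusChar fun _ => (0:ℤ)) - ν hEx)) := by
    simp only [hr, hp, hq, map_sub, map_add, _root_.map_smul, smul_eq_mul]
  rw [hνr, h3, hνh] at e
  rw [muEx_apply]
  linear_combination -e

lemma norm_torusChar_le (m : Fin 1 → ℤ) : ‖torusChar m‖ ≤ 1 :=
  (ContinuousMap.norm_le _ zero_le_one).mpr fun x => by
    rw [torusChar_apply, norm_fourier]

lemma extrap_lower (ν : TorusMeasure 1) (hE : IsExtrapolation muEx LamEx ν) : 2 ≤ ‖ν‖ := by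
  obtain ⟨h1, _, _⟩ := extrap_vals ν hE
  have hle : ‖ν (torusChar (fun _ => (1:ℤ)))‖ ≤ ‖ν‖ * ‖torusChar (fun _ => (1:ℤ))‖ :=
    ν.le_opNorm _
  rw [h1] at hle
  have h2 : ‖(2:ℂ)‖ = 2 := by norm_num
  rw [h2] at hle
  calc (2:ℝ) ≤ ‖ν‖ * ‖torusChar (fun _ => (1:ℤ))‖ := hle
  _ ≤ ‖ν‖ * 1 := by
      exact mul_le_mul_of_nonneg_left (norm_torusChar_le _) (ContinuousLinearMap.opNorm_nonneg _)
  _ = ‖ν‖ := mul_one _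

lemma extrap_self : IsExtrapolation muEx LamEx muEx := fun _ _ => rfl

lemma muEx_norm_le : ‖muEx‖ ≤ 2 := by
  refine ContinuousLinearMap.opNorm_le_bound _ (by norm_num) fun f => ?_
  rw [muEx_apply]
  calc ‖f P0 - f P1‖ ≤ ‖f P0‖ + ‖f P1‖ := norm_sub_le _ _
  _ ≤ ‖f‖ + ‖f‖ := add_le_add (f.norm_coe_le_norm _) (f.norm_coe_le_norm _)
  _ = 2 * ‖f‖ := by ring

lemma muEx_norm : ‖muEx‖ = 2 := le_antisymm muEx_norm_le (extrap_lower muEx extrap_self)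

lemma minExtNorm_eq : minExtNorm muEx LamEx = 2 := by
  rw [minExtNorm]
  apply le_antisymm
  · exact csInf_le ⟨0, by rintro r ⟨ν, _, rfl⟩; exact ContinuousLinearMap.opNorm_nonneg _⟩
      ⟨muEx, extrap_self, muEx_norm⟩
  · refine le_csInf ⟨‖muEx‖, Set.mem_image_of_mem _ extrap_self⟩ ?_
    rintro b ⟨ν, hν, rfl⟩
    exact extrap_lower ν hν

end Example32

/-- **Example 3.2.** For `μ = δ_0 − δ_{1/2} ∈ M(𝕋)` and `Λ = {−1, 0, 1}`:
`ε(μ,Λ) = 2` and `μ` is the unique minimal extrapolation, `𝓔(μ,Λ) = {μ}`; hence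
super-resolution reconstruction of `μ` from `Λ` is possible. -/
theorem diracDifference_unique_minimalExtrapolation :
    minExtNorm (diracM (fun _ => (0 : AddCircle (1 : ℝ))) -
        diracM (fun _ => ((1 / 2 : ℝ) : AddCircle (1 : ℝ))))
      ({fun _ => -1, fun _ => 0, fun _ => 1} : Finset (Fin 1 → ℤ)) = 2 ∧
    {ν : TorusMeasure 1 |
        IsMinimalExtrapolation
          (diracM (fun _ => (0 : AddCircle (1 : ℝ))) -
            diracM (fun _ => ((1 / 2 : ℝ) : AddCircle (1 : ℝ))))
          ({fun _ => -1, fun _ => 0, fun _ => 1} : Finset (Fin 1 → ℤ)) ν} =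
      {diracM (fun _ => (0 : AddCircle (1 : ℝ))) -
        diracM (fun _ => ((1 / 2 : ℝ) : AddCircle (1 : ℝ)))} := by
  constructor
  · exact Example32.minExtNorm_eq
  · ext ν
    simp only [Set.mem_setOf_eq, Set.mem_singleton_iff, IsMinimalExtrapolation]
    constructor
    · rintro ⟨hE, hnorm⟩
      rw [Example32.minExtNorm_eq] at hnorm
      exact Example32.reconstruct ν hE hnorm.le
    · rintro rfl
      exact ⟨Example32.extrap_self, Example32.muEx_norm.trans Example32.minExtNorm_eq.symm⟩


end
end
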